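/- Let A, B be n×n complex matrices such that BᴴA is positive semidefinite. Then the following conditions are equivalent: (i) BᴴA = 0; (ii) |B + γ·A| ≥ |B| for all γ ∈ ℂ (i.e., |B + γ·A| − |B| is positive semidefinite for every γ ∈ ℂ). -/

import Mathlib

open Matrix ComplexOrder

namespace Matrix.PosSemidef

/-- The square root of a positive semidefinite matrix, as in the older Mathlib
(`Matrix.PosSemidef.sqrt`, since removed). -/
noncomputable def sqrt {n 𝕜 : Type*} [Fintype n] [RCLike 𝕜] [DecidableEq n] {A : Matrix n n 𝕜}
    (hA : PosSemidef A) : Matrix n n 𝕜 :=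
  hA.1.eigenvectorUnitary.1 * diagonal ((↑) ∘ (√·) ∘ hA.1.eigenvalues) *
  (star hA.1.eigenvectorUnitary : Matrix n n 𝕜)

theorem posSemidef_sqrt {n 𝕜 : Type*} [Fintype n] [RCLike 𝕜] [DecidableEq n] {A : Matrix n n 𝕜}
    (hA : PosSemidef A) : PosSemidef hA.sqrt := by
  apply PosSemidef.mul_mul_conjTranspose_same
  refine posSemidef_diagonal_iff.mpr fun i => ?_
  simpa using Real.sqrt_nonneg (hA.1.eigenvalues i)

end Matrix.PosSemidef

namespace Matrix.PosSemidef

theorem sqrt_mul_self {n 𝕜 : Type*} [Fintype n] [RCLike 𝕜] [DecidableEq n] {A : Matrix n n 𝕜}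
    (hA : PosSemidef A) : hA.sqrt * hA.sqrt = A := by
  have hU : (star hA.1.eigenvectorUnitary : Matrix n n 𝕜) * hA.1.eigenvectorUnitary = 1 :=
    Unitary.coe_star_mul_self _
  have hD : diagonal ((↑) ∘ (√·) ∘ hA.1.eigenvalues) * diagonal ((↑) ∘ (√·) ∘ hA.1.eigenvalues)
      = diagonal (RCLike.ofReal ∘ hA.1.eigenvalues : n → 𝕜) := by
    rw [diagonal_mul_diagonal]
    congr 1
    funext i
    simp only [Function.comp_apply, ← RCLike.ofReal_mul]
    rw [Real.mul_self_sqrt (hA.eigenvalues_nonneg i)]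
  conv_rhs => rw [hA.1.spectral_theorem]
  unfold sqrt
  rw [Unitary.conjStarAlgAut_apply]
  calc _ = (hA.1.eigenvectorUnitary : Matrix n n 𝕜) * diagonal ((↑) ∘ (√·) ∘ hA.1.eigenvalues) *
      ((star hA.1.eigenvectorUnitary : Matrix n n 𝕜) * (hA.1.eigenvectorUnitary : Matrix n n 𝕜)) *
      diagonal ((↑) ∘ (√·) ∘ hA.1.eigenvalues) * (star hA.1.eigenvectorUnitary : Matrix n n 𝕜) := by
        simp only [mul_assoc]
    _ = _ := by rw [hU, mul_one, mul_assoc _ (diagonal _) (diagonal _), hD]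

end Matrix.PosSemidef

section Aux

variable {n : ℕ}

private lemma psd_trace_nonneg {P : Matrix (Fin n) (Fin n) ℂ} (hP : P.PosSemidef) :
    0 ≤ P.trace := by
  rw [Matrix.trace]
  refine Finset.sum_nonneg fun i _ => ?_
  have := hP.dotProduct_mulVec_nonneg (Pi.single i 1)
  simpa [Matrix.mulVec_single, dotProduct, Pi.single_apply, Finset.sum_ite_eq,
    Matrix.diag] using this

private lemma psd_trace_mul_nonneg {P Q : Matrix (Fin n) (Fin n) ℂ}
    (hP : P.PosSemidef) (hQ : Q.PosSemidef) : 0 ≤ (P * Q).trace := by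
  have h1 : P * Q = hP.sqrt * (hP.sqrt * Q) := by
    rw [← mul_assoc, hP.sqrt_mul_self]
  rw [h1, Matrix.trace_mul_comm]
  rw [mul_assoc, ← mul_assoc]
  have := hQ.conjTranspose_mul_mul_same hP.sqrt
  rw [hP.posSemidef_sqrt.1.eq] at this
  exact psd_trace_nonneg this

private lemma psd_eq_zero_of_trace {P : Matrix (Fin n) (Fin n) ℂ} (hP : P.PosSemidef)
    (h : P.trace.re ≤ 0) : P = 0 := by
  have hdiag : ∀ i, 0 ≤ star (Pi.single i 1 : Fin n → ℂ) ⬝ᵥ P *ᵥ Pi.single i 1 :=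
    fun i => hP.dotProduct_mulVec_nonneg _
  have hdiag' : ∀ i, star (Pi.single i 1 : Fin n → ℂ) ⬝ᵥ P *ᵥ Pi.single i 1 = P i i := by
    intro i
    simp [Matrix.mulVec_single, dotProduct, Pi.single_apply, Finset.sum_ite_eq]
  have htr : P.trace = ∑ i, star (Pi.single i 1 : Fin n → ℂ) ⬝ᵥ P *ᵥ Pi.single i 1 := by
    rw [Matrix.trace]
    exact Finset.sum_congr rfl fun i _ => (hdiag' i).symm
  have hsum0 : ∑ i, star (Pi.single i 1 : Fin n → ℂ) ⬝ᵥ P *ᵥ Pi.single i 1 = 0 := by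
    have h0 : (0:ℂ) ≤ P.trace := psd_trace_nonneg hP
    have : P.trace = 0 := by
      rw [Complex.nonneg_iff] at h0
      apply Complex.ext <;> simp [le_antisymm h h0.1, ← h0.2]
    rw [← htr, this]
  have hz : ∀ i ∈ Finset.univ, star (Pi.single i 1 : Fin n → ℂ) ⬝ᵥ P *ᵥ Pi.single i 1 = 0 :=
    (Finset.sum_eq_zero_iff_of_nonneg (fun i _ => hdiag i)).mp hsum0
  ext i j
  have := (hP.dotProduct_mulVec_zero_iff (Pi.single j 1)).mp (hz j (Finset.mem_univ _))
  have := congrFun this i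
  simpa [Matrix.mulVec_single] using this

private lemma sqrt_mono {M N : Matrix (Fin n) (Fin n) ℂ} (hM : M.PosSemidef) (hN : N.PosSemidef)
    (h : (N - M).PosSemidef) : (hN.sqrt - hM.sqrt).PosSemidef := by
  set S := hM.sqrt with hSdef
  set T := hN.sqrt with hTdef
  have hS := hM.posSemidef_sqrt
  have hT := hN.posSemidef_sqrt
  have hH : (T - S).IsHermitian := hT.1.sub hS.1
  refine hH.posSemidef_iff_eigenvalues_nonneg.mpr (Pi.le_def.mpr fun i => (?_ : (0:ℝ) ≤ hH.eigenvalues i))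
  by_contra hneg
  push_neg at hneg
  set t := hH.eigenvalues i with htdef
  set v : Fin n → ℂ := ⇑(hH.eigenvectorBasis i) with hvdef
  have hcoe : (t : ℂ) • v = t • v := by
    ext j; simp [Complex.real_smul]
  have hv : (T - S) *ᵥ v = (t : ℂ) • v := by
    rw [hcoe]; exact hH.mulVec_eigenvectorBasis i
  have hv0 : v ≠ 0 := by
    intro h0
    apply hH.eigenvectorBasis.orthonormal.ne_zero i
    ext j
    exact congrFun h0 j
  set a := star v ⬝ᵥ T *ᵥ v with hadef
  set b := star v ⬝ᵥ S *ᵥ v with hbdef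
  have e1 : star v ⬝ᵥ (T * (T - S)) *ᵥ v = (t : ℂ) * a := by
    rw [← mulVec_mulVec, hv, mulVec_smul, dotProduct_smul, smul_eq_mul]
  have e2 : star v ⬝ᵥ ((T - S) * S) *ᵥ v = (t : ℂ) * b := by
    rw [← mulVec_mulVec, dotProduct_mulVec]
    have h1 : star v ᵥ* (T - S) = star ((T - S) *ᵥ v) := by
      rw [star_mulVec, hH.eq]
    rw [h1, hv]
    have h2 : star ((t : ℂ) • v) = (t : ℂ) • star v := by
      ext j; simp [Complex.conj_ofReal]
    rw [h2, smul_dotProduct, smul_eq_mul]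
  have key : star v ⬝ᵥ (N - M) *ᵥ v = (t : ℂ) * a + (t : ℂ) * b := by
    have hNM : N - M = T * (T - S) + (T - S) * S := by
      have h1 : T * T = N := hN.sqrt_mul_self
      have h2 : S * S = M := hM.sqrt_mul_self
      rw [← h1, ← h2]; noncomm_ring
    rw [hNM, add_mulVec, dotProduct_add, e1, e2]
  have hpos := h.dotProduct_mulVec_nonneg v
  rw [key] at hpos
  have ha : 0 ≤ a := hT.dotProduct_mulVec_nonneg v
  have hb : 0 ≤ b := hS.dotProduct_mulVec_nonneg v
  rw [Complex.nonneg_iff] at ha hb hpos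
  have hre : 0 ≤ t * a.re + t * b.re := by
    have := hpos.1
    simpa [Complex.add_re, Complex.mul_re, Complex.ofReal_re, Complex.ofReal_im,
      ← ha.2, ← hb.2] using this
  have ha0 : a = 0 := by
    apply Complex.ext
    · simp only [Complex.zero_re]; nlinarith [ha.1, hb.1]
    · simp [← ha.2]
  have hb0 : b = 0 := by
    apply Complex.ext
    · simp only [Complex.zero_re]; nlinarith [ha.1, hb.1]
    · simp [← hb.2]
  have hTv : T *ᵥ v = 0 := (hT.dotProduct_mulVec_zero_iff v).mp ha0
  have hSv : S *ᵥ v = 0 := (hS.dotProduct_mulVec_zero_iff v).mp hb0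
  have hz : (t : ℂ) • v = 0 := by rw [← hv, sub_mulVec, hTv, hSv, sub_zero]
  rcases smul_eq_zero.mp hz with h1 | h2
  · exact absurd (Complex.ofReal_eq_zero.mp h1) (ne_of_lt hneg)
  · exact hv0 h2

private lemma expand_prod (A B : Matrix (Fin n) (Fin n) ℂ) (γ : ℂ) :
    (B + γ • A)ᴴ * (B + γ • A)
      = Bᴴ * B + γ • (Bᴴ * A) + star γ • (Aᴴ * B) + (γ * star γ) • (Aᴴ * A) := by
  simp only [conjTranspose_add, conjTranspose_smul, add_mul, mul_add,
    Matrix.smul_mul, Matrix.mul_smul, smul_smul]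
  abel

end Aux

/-- The absolute value `|A| = (AᴴA)^(1/2)` of a complex matrix `A`. -/
noncomputable def matAbs {n : ℕ} (A : Matrix (Fin n) (Fin n) ℂ) : Matrix (Fin n) (Fin n) ℂ :=
  (Matrix.posSemidef_conjTranspose_mul_self A).sqrt

/-- The Schatten `p`-norm `‖A‖ₚ = (tr |A|^p)^(1/p)`, computed via the eigenvalues of `|A|`. -/
noncomputable def schattenNorm {n : ℕ} (p : ℝ) (A : Matrix (Fin n) (Fin n) ℂ) : ℝ :=
  (∑ i, ((Matrix.posSemidef_conjTranspose_mul_self A).posSemidef_sqrt.1.eigenvalues i) ^ p) ^ (1 / p)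

theorem conjTranspose_mul_eq_zero_iff_abs_dominates {n : ℕ}
    (A B : Matrix (Fin n) (Fin n) ℂ) (hBA : (Bᴴ * A).PosSemidef) :
    Bᴴ * A = 0 ↔ ∀ γ : ℂ, (matAbs (B + γ • A) - matAbs B).PosSemidef := by
  constructor
  · intro h0 γ
    have hA0 : Aᴴ * B = 0 := by
      have := congrArg conjTranspose h0
      simpa using this
    have hexp : (B + γ • A)ᴴ * (B + γ • A) - Bᴴ * B = (γ • A)ᴴ * (γ • A) := by
      rw [expand_prod, h0, hA0]
      simp only [smul_zero, add_zero, conjTranspose_smul, Matrix.smul_mul, Matrix.mul_smul,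
        smul_smul, add_sub_cancel_left]
    have hdiff : ((B + γ • A)ᴴ * (B + γ • A) - Bᴴ * B).PosSemidef := by
      rw [hexp]; exact posSemidef_conjTranspose_mul_self _
    exact sqrt_mono (posSemidef_conjTranspose_mul_self B)
      (posSemidef_conjTranspose_mul_self (B + γ • A)) hdiff
  · intro h
    set C := Bᴴ * A with hCdef
    set c := C.trace.re with hcdef
    set k := (Aᴴ * A).trace.re with hkdef
    have hCtr : 0 ≤ C.trace := psd_trace_nonneg hBA
    have hKtr : 0 ≤ (Aᴴ * A).trace := psd_trace_nonneg (posSemidef_conjTranspose_mul_self A)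
    rw [Complex.nonneg_iff] at hCtr hKtr
    have key : ∀ t : ℝ, 0 < t → 2 * t * c ≤ t ^ 2 * k := by
      intro t ht
      set X := B + (-(t : ℂ)) • A with hXdef
      set S := matAbs X with hSdef
      set T := matAbs B with hTdef
      have hS : S.PosSemidef := (posSemidef_conjTranspose_mul_self X).posSemidef_sqrt
      have hT : T.PosSemidef := (posSemidef_conjTranspose_mul_self B).posSemidef_sqrt
      have hD : (S - T).PosSemidef := h (-(t : ℂ))
      have h1 := psd_trace_mul_nonneg hD hS
      have h2 := psd_trace_mul_nonneg hT hD
      have hSS : S * S = Xᴴ * X := (posSemidef_conjTranspose_mul_self X).sqrt_mul_self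
      have hTT : T * T = Bᴴ * B := (posSemidef_conjTranspose_mul_self B).sqrt_mul_self
      have hsum : ((S - T) * S).trace + (T * (S - T)).trace
          = (Xᴴ * X).trace - (Bᴴ * B).trace := by
        rw [← Matrix.trace_add]
        have : (S - T) * S + T * (S - T) = S * S - T * T := by noncomm_ring
        rw [this, hSS, hTT, Matrix.trace_sub]
      have htrpos : 0 ≤ (Xᴴ * X).trace - (Bᴴ * B).trace := by
        rw [← hsum]; exact add_nonneg h1 h2
      have hCherm : Aᴴ * B = C := by
        calc Aᴴ * B = (Bᴴ * A)ᴴ := by rw [conjTranspose_mul, conjTranspose_conjTranspose]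
        _ = C := hBA.1
      have hdiff : (Xᴴ * X).trace - (Bᴴ * B).trace
          = (-(t : ℂ)) * C.trace + (-(t : ℂ)) * C.trace + ((t : ℂ) ^ 2) * (Aᴴ * A).trace := by
        rw [hXdef, expand_prod, hCherm]
        have hstar : star (-(t : ℂ)) = -(t : ℂ) := by
          simp [Complex.conj_ofReal]
        rw [hstar]
        have hsq : (-(t:ℂ)) * (-(t:ℂ)) = (t:ℂ)^2 := by ring
        rw [hsq, ← hCdef]
        simp only [Matrix.trace_add, Matrix.trace_smul, smul_eq_mul]
        ring
      rw [hdiff] at htrpos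
      rw [Complex.nonneg_iff] at htrpos
      have him : C.trace.im = 0 := hCtr.2.symm
      have him2 : (Aᴴ * A).trace.im = 0 := hKtr.2.symm
      have hpowre : ((t : ℂ) ^ 2).re = t ^ 2 := by
        rw [← Complex.ofReal_pow, Complex.ofReal_re]
      have hpowim : ((t : ℂ) ^ 2).im = 0 := by
        rw [← Complex.ofReal_pow, Complex.ofReal_im]
      have hre' : 0 ≤ -t * c + -t * c + t ^ 2 * k := by
        have : ((-(t : ℂ)) * C.trace + (-(t : ℂ)) * C.trace
            + ((t : ℂ) ^ 2) * (Aᴴ * A).trace).re = -t * c + -t * c + t ^ 2 * k := by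
          simp [Complex.add_re, Complex.mul_re, him, him2, hpowre, hpowim, hcdef, hkdef]
        rw [this] at htrpos
        exact htrpos.1
      linarith
    have hc0 : c ≤ 0 := by
      by_contra hc
      push_neg at hc
      have hk0 : 0 ≤ k := hKtr.1
      rcases eq_or_lt_of_le hk0 with hk | hk
      · have h1 := key 1 one_pos
        rw [← hk] at h1
        nlinarith
      · have ht : 0 < c / k := div_pos hc hk
        have h1 := key (c / k) ht
        have e1 : (c / k) ^ 2 * k = c ^ 2 / k := by
          field_simp
        have e2 : 2 * (c / k) * c = 2 * (c ^ 2 / k) := by ring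
        rw [e1, e2] at h1
        have hp : 0 < c ^ 2 / k := by positivity
        linarith
    exact psd_eq_zero_of_trace hBA hc0
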